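/- Let V be a finite type and E : V → V → Prop a relation with no directed cycles (¬ Relation.TransGen E v v for every v). If E is strongly reduced, then E is reduced. -/

import Mathlib

/-- A directed path of length `k` in `(V, E)`: a map `p : Fin (k+1) → V` with
`E (p i) (p (i+1))` for all `i < k`. -/
def IsDirPath {V : Type*} (E : V → V → Prop) (k : ℕ) (p : Fin (k + 1) → V) : Prop :=
  ∀ i : Fin k, E (p i.castSucc) (p i.succ)

/-- A directed path of length `k` from `v` to `w`. -/
def IsDirPathFromTo {V : Type*} (E : V → V → Prop) (k : ℕ) (p : Fin (k + 1) → V)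
    (v w : V) : Prop :=
  p 0 = v ∧ p (Fin.last k) = w ∧ IsDirPath E k p

/-- `E` is reduced: for every pair of vertices `v, w` with `w` reachable from `v`, there is
a directed path from `v` to `w` whose vertex set contains the vertex set of every directed
path from `v` to `w`. -/
def Reduced {V : Type*} (E : V → V → Prop) : Prop :=
  ∀ v w : V, Relation.TransGen E v w →
    ∃ (m : ℕ) (γM : Fin (m + 1) → V), IsDirPathFromTo E m γM v w ∧
      ∀ (k : ℕ) (γ : Fin (k + 1) → V), IsDirPathFromTo E k γ v w →
        Set.range γ ⊆ Set.range γM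

/-- A topological order of `(V, E)`: an injective map `f : V → ℕ` with `f u < f v`
whenever `E u v`. -/
def IsTopologicalOrder {V : Type*} (E : V → V → Prop) (f : V → ℕ) : Prop :=
  Function.Injective f ∧ ∀ u v : V, E u v → f u < f v

/-- `L` is the list of the elements of `S`, sorted in strictly increasing order of `f`. -/
def IsSortedListOf {V : Type*} (f : V → ℕ) (S : Set V) (L : List V) : Prop :=
  (∀ x : V, x ∈ L ↔ x ∈ S) ∧ L.Pairwise fun x y => f x < f y

/-- The list `L` is a directed path from `v` to `w`: its first element is `v`, its last
element is `w`, and consecutive elements are related by `E`. -/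
def IsDirPathList {V : Type*} (E : V → V → Prop) (v w : V) (L : List V) : Prop :=
  L.head? = some v ∧ L.getLast? = some w ∧ L.Chain' E

/-- `E` is strongly reduced: for every topological order `f`, every pair of vertices `v, w`
and every two directed paths `γ, γ'` from `v` to `w`, the list of vertices of the union of
the vertex sets of `γ` and `γ'`, sorted in strictly increasing order of `f`, is a directed
path from `v` to `w`. -/
def StronglyReduced {V : Type*} (E : V → V → Prop) : Prop :=
  ∀ f : V → ℕ, IsTopologicalOrder E f →
    ∀ (v w : V) (k k' : ℕ) (γ : Fin (k + 1) → V) (γ' : Fin (k' + 1) → V),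
      IsDirPathFromTo E k γ v w → IsDirPathFromTo E k' γ' v w →
        ∀ L : List V, IsSortedListOf f (Set.range γ ∪ Set.range γ') L →
          IsDirPathList E v w L


section Aux
variable {V : Type*}

/-- Every list path yields a `Fin`-indexed path with the same vertex set. -/
lemma listPath_to_finPath (E : V → V → Prop) {v w : V} {L : List V}
    (hL : IsDirPathList E v w L) :
    ∃ (k : ℕ) (γ : Fin (k + 1) → V), IsDirPathFromTo E k γ v w ∧
      Set.range γ = {x | x ∈ L} := by
  obtain ⟨h1, h2, h3⟩ := hL
  have hne : L ≠ [] := by rintro rfl; simp at h1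
  have hlen : 0 < L.length := List.length_pos_iff.2 hne
  refine ⟨L.length - 1, fun i => L.get ⟨i.val, by omega⟩, ⟨?_, ?_, ?_⟩, ?_⟩
  · rw [List.head?_eq_getElem?] at h1
    have : L[0]? = some L[0] := List.getElem?_eq_getElem hlen
    rw [this] at h1
    simpa using h1
  · rw [List.getLast?_eq_getElem?] at h2
    have h4 : L.length - 1 < L.length := by omega
    have : L[L.length - 1]? = some L[L.length - 1] := List.getElem?_eq_getElem h4
    rw [this] at h2
    have h5 := Option.some_injective _ h2
    simpa using h5
  · intro i
    have := List.isChain_iff_getElem.1 h3 i.val (by omega)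
    simpa using this
  · ext x
    simp only [Set.mem_range, Set.mem_setOf_eq, List.mem_iff_getElem]
    constructor
    · rintro ⟨i, rfl⟩; exact ⟨i.val, by omega, by simp⟩
    · rintro ⟨n, hn, rfl⟩; exact ⟨⟨n, by omega⟩, by simp⟩

lemma transGen_to_listPath (E : V → V → Prop) {v w : V}
    (h : Relation.TransGen E v w) :
    ∃ L : List V, IsDirPathList E v w L := by
  induction h with
  | single h =>
    refine ⟨[v, _], rfl, rfl, ?_⟩
    exact List.isChain_pair.2 h
  | @tail b c _ hbc ih =>
    obtain ⟨L, h1, h2, h3⟩ := ih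
    have hne : L ≠ [] := by rintro rfl; simp at h1
    refine ⟨L ++ [c], ?_, ?_, ?_⟩
    · rwa [List.head?_append_of_ne_nil _ hne]
    · simp
    · show List.IsChain E (L ++ [c])
      rw [List.isChain_append]
      refine ⟨h3, List.isChain_singleton _, ?_⟩
      intro x hx y hy
      rw [h2] at hx
      simp at hx hy
      subst hx; subst hy
      exact hbc

lemma exists_topo (E : V → V → Prop) [Fintype V]
    (hacyc : ∀ v : V, ¬Relation.TransGen E v v) :
    ∃ f : V → ℕ, IsTopologicalOrder E f := by
  classical
  haveI : IsPartialOrder V (Relation.ReflTransGen E) :=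
    { refl := fun a => Relation.ReflTransGen.refl
      trans := fun a b c => Relation.ReflTransGen.trans
      antisymm := by
        intro a b hab hba
        by_contra hne
        rcases hab.cases_head with rfl | ⟨c, hac, hcb⟩
        · exact hne rfl
        · exact hacyc a (Relation.TransGen.head' hac (hcb.trans hba)) }
  obtain ⟨s, hs, hle⟩ := extend_partialOrder (Relation.ReflTransGen E)
  set f : V → ℕ := fun v => (Finset.univ.filter fun u => s u v).card with hf
  have key : ∀ u v : V, s u v → u ≠ v → f u < f v := by
    intro u v huv hne
    apply Finset.card_lt_card
    rw [Finset.ssubset_iff_of_subset]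
    · exact ⟨v, by simpa using refl_of s v, by
        simp only [Finset.mem_filter, Finset.mem_univ, true_and]
        intro hvu
        exact hne (antisymm huv hvu)⟩
    · intro x hx
      simp only [Finset.mem_filter, Finset.mem_univ, true_and] at hx ⊢
      exact trans_of s hx huv
  refine ⟨f, ?_, ?_⟩
  · intro u v huv
    by_contra hne
    rcases total_of s u v with h | h
    · exact absurd huv (key u v h hne).ne
    · exact absurd huv.symm (key v u h (Ne.symm hne)).ne
  · intro u v huv
    have ht : Relation.TransGen E u v := Relation.TransGen.single huv
    have hne : u ≠ v := by rintro rfl; exact hacyc u ht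
    exact key u v (hle u v ht.to_reflTransGen) hne

end Aux

theorem stronglyReduced_imp_reduced' {V : Type*} [Fintype V] (E : V → V → Prop)
    (hacyc : ∀ v : V, ¬Relation.TransGen E v v)
    (hsr : StronglyReduced E) : Reduced E := by
  classical
  obtain ⟨f, hf⟩ := exists_topo E hacyc
  intro v w hvw
  -- set of vertex sets of paths from v to w
  set P : Set (Finset V) := {S | ∃ (k : ℕ) (γ : Fin (k + 1) → V),
    IsDirPathFromTo E k γ v w ∧ Finset.image γ Finset.univ = S} with hP
  have hPne : P.Nonempty := by
    obtain ⟨L, hL⟩ := transGen_to_listPath E hvw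
    obtain ⟨k, γ, hγ, -⟩ := listPath_to_finPath E hL
    exact ⟨_, k, γ, hγ, rfl⟩
  obtain ⟨S, ⟨m, γM, hγM, hSM⟩, hmax⟩ :=
    Set.Finite.exists_maximalFor Finset.card P (Set.toFinite P) hPne
  refine ⟨m, γM, hγM, ?_⟩
  intro k γ hγ
  -- sort the union
  set r : V → V → Prop := fun x y => f x ≤ f y with hr
  haveI : IsTrans V r := ⟨fun a b c => le_trans⟩
  haveI : Std.Antisymm r := ⟨fun a b hab hba => hf.1 (le_antisymm hab hba)⟩
  haveI : Std.Total r := ⟨fun a b => le_total _ _⟩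
  set T : Finset V := Finset.image γ Finset.univ ∪ Finset.image γM Finset.univ with hT
  set L : List V := T.sort r with hL
  have hmemT : ∀ x, x ∈ T ↔ x ∈ Set.range γ ∪ Set.range γM := by
    intro x
    simp [hT, Set.mem_union]
  have hsorted : IsSortedListOf f (Set.range γ ∪ Set.range γM) L := by
    constructor
    · intro x
      rw [hL, Finset.mem_sort]
      exact hmemT x
    · have h1 := Finset.pairwise_sort T r
      have h2 := Finset.sort_nodup T r
      rw [← hL] at h1 h2
      have := (List.Pairwise.and h1 h2 : L.Pairwise fun a b => r a b ∧ a ≠ b)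
      exact this.imp fun {a b} h => lt_of_le_of_ne h.1 fun he => h.2 (hf.1 he)
  have hpathL : IsDirPathList E v w L := hsr f hf v w k m γ γM hγ hγM L hsorted
  obtain ⟨k', γU, hγU, hrangeU⟩ := listPath_to_finPath E hpathL
  have hrangeU' : Set.range γU = ↑T := by
    rw [hrangeU]; ext x; rw [Set.mem_setOf_eq, hL, Finset.mem_sort]; simp
  have hsub : S ⊆ Finset.image γU Finset.univ := by
    intro x hx
    have : x ∈ Set.range γU := by
      rw [hrangeU', Finset.mem_coe, hT]
      rw [← hSM] at hx
      exact Finset.mem_union_right _ hx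
    obtain ⟨i, rfl⟩ := this
    exact Finset.mem_image_of_mem _ (Finset.mem_univ i)
  have hUP : Finset.image γU Finset.univ ∈ P := ⟨k', γU, hγU, rfl⟩
  have hcard := le_antisymm (Finset.card_le_card hsub) (hmax hUP (Finset.card_le_card hsub))
  have heq : S = Finset.image γU Finset.univ :=
    Finset.eq_of_subset_of_card_le hsub (le_of_eq hcard.symm)
  intro x hx
  have hxT : x ∈ Set.range γU := by
    rw [hrangeU', Finset.mem_coe, hT]
    obtain ⟨i, rfl⟩ := hx
    exact Finset.mem_union_left _ (Finset.mem_image_of_mem _ (Finset.mem_univ i))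
  obtain ⟨i, rfl⟩ := hxT
  have : γU i ∈ S := heq ▸ Finset.mem_image_of_mem _ (Finset.mem_univ i)
  rw [← hSM] at this
  simpa using this

theorem stronglyReduced_imp_reduced {V : Type*} [Fintype V] (E : V → V → Prop)
    (hacyc : ∀ v : V, ¬Relation.TransGen E v v)
    (hsr : StronglyReduced E) : Reduced E := by
  exact stronglyReduced_imp_reduced' E hacyc hsr
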